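/- arXiv:2402.06546 — 2 statements merged into one kernel-verified Lean document; each statement's English description precedes it below -/
import Mathlib

section
/- Given a triangulation T of a convex polygon and a weighting p (a function from vertices to Z/3), there is at most one 2-colouring s of the triangles of T such that for every vertex x, p(x) equals the sum mod 3 of s over the triangles incident with x. -/
namespace PolyFlip


/-- Two vertices of the convex `N`-gon are consecutive along the boundary. -/
def BdryAdj (N : ℕ) (i j : Fin N) : Prop :=
  (i.val + 1) % N = j.val ∨ (j.val + 1) % N = i.val

/-- `d` is a diagonal of the convex `N`-gon: an unordered pair of distinct,
non-consecutive vertices. -/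
def IsDiag (N : ℕ) (d : Finset (Fin N)) : Prop :=
  ∃ i j : Fin N, i ≠ j ∧ ¬ BdryAdj N i j ∧ d = {i, j}

/-- The chord `d` crosses the chord `e` (in this orientation): the endpoints
interlace in the cyclic (here: linear) order of the polygon's vertices. -/
def Crosses {N : ℕ} (d e : Finset (Fin N)) : Prop :=
  ∃ a b c f : Fin N, d = {a, b} ∧ e = {c, f} ∧ a < c ∧ c < b ∧ b < f

/-- A triangulation of the convex `N`-gon: a maximal set of pairwise
non-crossing diagonals. -/
structure Triangulation (N : ℕ) where
  diags : Finset (Finset (Fin N))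
  isDiag : ∀ d ∈ diags, IsDiag N d
  noncross : ∀ d ∈ diags, ∀ e ∈ diags, ¬ Crosses d e
  maximal : ∀ d, IsDiag N d → (∀ e ∈ diags, ¬ Crosses d e ∧ ¬ Crosses e d) → d ∈ diags

/-- `a` and `b` are joined by an edge of the triangulated polygon:
either a boundary edge, or a diagonal of the triangulation. -/
def IsEdge {N : ℕ} (T : Triangulation N) (a b : Fin N) : Prop :=
  a ≠ b ∧ (BdryAdj N a b ∨ ({a, b} : Finset (Fin N)) ∈ T.diags)

/-- `t` is a triangle (face) of the triangulation `T`. -/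
def IsTriangle {N : ℕ} (T : Triangulation N) (t : Finset (Fin N)) : Prop :=
  ∃ a b c : Fin N, a ≠ b ∧ a ≠ c ∧ b ≠ c ∧ t = {a, b, c} ∧
    IsEdge T a b ∧ IsEdge T a c ∧ IsEdge T b c

/-- A coloured triangulation: a triangulation together with a colour in
`Fin m` for each of its triangles. -/
structure ColouredTri (N m : ℕ) where
  T : Triangulation N
  col : {t : Finset (Fin N) // IsTriangle T t} → Fin m

/-- The degree of a vertex `x` in the triangulated polygon. -/
noncomputable def degree {N : ℕ} (T : Triangulation N) (x : Fin N) : ℕ :=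
  Nat.card {y : Fin N // IsEdge T x y}

/-- The `σ`-flip at the diagonal `d`: `d = {a,b}` is a diagonal of `C` whose two
incident triangles `{a,b,x}` and `{a,b,y}` have the same colour `i`; it is replaced by
the other diagonal `{x,y}` of the quadrilateral, the two new triangles `{a,x,y}` and
`{b,x,y}` get colour `σ i`, and all other triangles keep their colours. -/
def SFlipAt {N m : ℕ} (σ : Equiv.Perm (Fin m)) (d : Finset (Fin N))
    (C C' : ColouredTri N m) : Prop :=
  ∃ (a b x y : Fin N) (h₁ : IsTriangle C.T {a, b, x}) (h₂ : IsTriangle C.T {a, b, y})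
    (h₁' : IsTriangle C'.T {a, x, y}) (h₂' : IsTriangle C'.T {b, x, y}),
    d = {a, b} ∧ d ∈ C.T.diags ∧ x ≠ y ∧
    C.col ⟨{a, b, x}, h₁⟩ = C.col ⟨{a, b, y}, h₂⟩ ∧
    C'.T.diags = insert {x, y} (C.T.diags.erase d) ∧
    C'.col ⟨{a, x, y}, h₁'⟩ = σ (C.col ⟨{a, b, x}, h₁⟩) ∧
    C'.col ⟨{b, x, y}, h₂'⟩ = σ (C.col ⟨{a, b, x}, h₁⟩) ∧
    ∀ (t : Finset (Fin N)) (ht : IsTriangle C.T t) (ht' : IsTriangle C'.T t),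
      t ≠ {a, b, x} → t ≠ {a, b, y} → C'.col ⟨t, ht'⟩ = C.col ⟨t, ht⟩

/-- The `σ`-flip relation. -/
def SFlip {N m : ℕ} (σ : Equiv.Perm (Fin m)) (C C' : ColouredTri N m) : Prop :=
  ∃ d, SFlipAt σ d C C'

/-- The 2-coloured flip at a diagonal (the colour permutation swaps the two colours). -/
abbrev Flip2At {N : ℕ} (d : Finset (Fin N)) (C C' : ColouredTri N 2) : Prop :=
  SFlipAt (finRotate 2) d C C'

/-- The 2-coloured flip relation. -/
abbrev Flip2 {N : ℕ} (C C' : ColouredTri N 2) : Prop :=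
  SFlip (finRotate 2) C C'

/-- The 2-coloured flip graph of the convex `N`-gon: vertices are the 2-coloured
triangulations, edges are single 2-coloured flips. -/
def flipGraph (N : ℕ) : SimpleGraph (ColouredTri N 2) where
  Adj C C' := C ≠ C' ∧ (Flip2 C C' ∨ Flip2 C' C)
  symm := ⟨fun C C' h => ⟨h.1.symm, h.2.symm⟩⟩
  loopless := ⟨fun C h => h.1 rfl⟩

/-- The sign (`+1` for colour `0`, `-1` for colour `1`) of a colour, in `ZMod 3`. -/
def signVal (c : Fin 2) : ZMod 3 := if c = 0 then 1 else -1

/-- The weight of a vertex `x`: the sum, modulo 3, of the signs of all triangles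
incident with `x`. -/
noncomputable def weight {N : ℕ} (C : ColouredTri N 2) (x : Fin N) : ZMod 3 :=
  ∑ᶠ t : {t : Finset (Fin N) // IsTriangle C.T t},
    if x ∈ t.val then signVal (C.col t) else 0

/-- The number of triangles coloured `+1` (colour `0`). -/
noncomputable def plusCount {N : ℕ} (C : ColouredTri N 2) : ℕ :=
  Nat.card {t : {t : Finset (Fin N) // IsTriangle C.T t} // C.col t = 0}

/-- Adjacency in the `k`-dimensional hypercube: the two vertices differ in
exactly one coordinate. -/
def cubeAdj (k : ℕ) (u v : Fin k → Bool) : Prop := ∃! i, u i ≠ v i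

/-- The `k`-dimensional hypercube graph on `{0,1}^k`. -/
def cubeGraph (k : ℕ) : SimpleGraph (Fin k → Bool) where
  Adj := cubeAdj k
  symm := by
    refine ⟨?_⟩
    rintro u v ⟨i, hi, hu⟩
    exact ⟨i, hi.symm, fun j hj => hu j hj.symm⟩
  loopless := by
    refine ⟨?_⟩
    rintro u ⟨i, hi, -⟩
    exact hi rfl

/-- `f` exhibits a `k`-dimensional hypercube inside the connected component of `C`
in the 2-coloured flip graph. -/
def CubeEmb {N : ℕ} (C : ColouredTri N 2) (k : ℕ)
    (f : (Fin k → Bool) → ColouredTri N 2) : Prop :=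
  Function.Injective f ∧
  (∀ u v, cubeAdj k u v → (flipGraph N).Adj (f u) (f v)) ∧
  ∀ u, (flipGraph N).Reachable C (f u)

/-- `G` contains a subdivision (topological copy) of `H`: there are branch vertices
`f w` for the vertices `w` of `H` and internally disjoint paths in `G` between them
realising the edges of `H`. -/
def ContainsSubdivision {V W : Type*} (G : SimpleGraph V) (H : SimpleGraph W) : Prop :=
  ∃ f : W → V, Function.Injective f ∧
    ∃ P : ∀ u v : W, H.Adj u v → G.Walk (f u) (f v),
      (∀ u v (h : H.Adj u v), (P u v h).IsPath) ∧
      (∀ u v (h : H.Adj u v) (w : W), f w ∈ (P u v h).support → w = u ∨ w = v) ∧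
      (∀ u₁ v₁ (h₁ : H.Adj u₁ v₁) u₂ v₂ (h₂ : H.Adj u₂ v₂),
        (s(u₁, v₁) : Sym2 W) ≠ s(u₂, v₂) →
        ∀ x, x ∈ (P u₁ v₁ h₁).support → x ∈ (P u₂ v₂ h₂).support →
          (x = f u₁ ∨ x = f v₁) ∧ (x = f u₂ ∨ x = f v₂))

/-- Planarity, via Kuratowski's characterisation: a graph is planar iff it contains
no subdivision of `K₅` and no subdivision of `K₃,₃`. -/
def IsPlanar {V : Type*} (G : SimpleGraph V) : Prop :=
  ¬ ContainsSubdivision G (SimpleGraph.completeGraph (Fin 5)) ∧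
  ¬ ContainsSubdivision G (completeBipartiteGraph (Fin 3) (Fin 3))

section Uniqueness

variable {N : ℕ}

lemma isEdge_symm (T : Triangulation N) {a b : Fin N} (h : IsEdge T a b) :
    IsEdge T b a := by
  obtain ⟨hne, h⟩ := h
  refine ⟨hne.symm, ?_⟩
  rcases h with h | h
  · exact Or.inl h.symm
  · rw [Finset.pair_comm]; exact Or.inr h

lemma tri_edge (T : Triangulation N) {t : Finset (Fin N)} (ht : IsTriangle T t)
    {x y : Fin N} (hx : x ∈ t) (hy : y ∈ t) (hxy : x ≠ y) : IsEdge T x y := by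
  obtain ⟨a, b, c, hab, hac, hbc, rfl, e1, e2, e3⟩ := ht
  simp only [Finset.mem_insert, Finset.mem_singleton] at hx hy
  rcases hx with rfl | rfl | rfl <;> rcases hy with rfl | rfl | rfl <;>
    first
      | exact absurd rfl hxy
      | exact e1
      | exact e2
      | exact e3
      | exact isEdge_symm T e1
      | exact isEdge_symm T e2
      | exact isEdge_symm T e3

lemma tri_card (T : Triangulation N) {t : Finset (Fin N)} (ht : IsTriangle T t) :
    t.card = 3 := by
  obtain ⟨a, b, c, hab, hac, hbc, rfl, -, -, -⟩ := ht
  exact Finset.card_eq_three.mpr ⟨a, b, c, hab, hac, hbc, rfl⟩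

lemma no_cross (T : Triangulation N) {a c b f : Fin N}
    (hac : a < c) (hcb : c < b) (hbf : b < f)
    (h1 : IsEdge T a b) (h2 : IsEdge T c f) : False := by
  have hac' : a.val < c.val := hac
  have hcb' : c.val < b.val := hcb
  have hbf' : b.val < f.val := hbf
  have hfN : f.val < N := f.isLt
  have hcr : Crosses ({a, b} : Finset (Fin N)) {c, f} :=
    ⟨a, b, c, f, rfl, rfl, hac, hcb, hbf⟩
  have hd1 : ({a, b} : Finset (Fin N)) ∈ T.diags := by
    rcases h1.2 with (h | h) | h
    · have : (a.val + 1) % N = a.val + 1 := Nat.mod_eq_of_lt (by omega)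
      omega
    · rcases Nat.lt_or_ge (b.val + 1) N with h' | h'
      · have : (b.val + 1) % N = b.val + 1 := Nat.mod_eq_of_lt h'
        omega
      · have hb1 : b.val + 1 = N := by omega
        have : (b.val + 1) % N = 0 := by rw [hb1]; exact Nat.mod_self N
        omega
    · exact h
  have hd2 : ({c, f} : Finset (Fin N)) ∈ T.diags := by
    rcases h2.2 with (h | h) | h
    · have : (c.val + 1) % N = c.val + 1 := Nat.mod_eq_of_lt (by omega)
      omega
    · rcases Nat.lt_or_ge (f.val + 1) N with h' | h'
      · have : (f.val + 1) % N = f.val + 1 := Nat.mod_eq_of_lt h'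
        omega
      · have hf1 : f.val + 1 = N := by omega
        have : (f.val + 1) % N = 0 := by rw [hf1]; exact Nat.mod_self N
        omega
    · exact h
  exact T.noncross _ hd1 _ hd2 hcr

lemma pair_eq {a b c d : Fin N} (hab : a < b) (hcd : c < d)
    (h : ({a, b} : Finset (Fin N)) = {c, d}) : a = c ∧ b = d := by
  have ha : a = c ∨ a = d := by
    have : a ∈ ({c, d} : Finset (Fin N)) := by rw [← h]; simp
    simpa using this
  have hb : b = c ∨ b = d := by
    have : b ∈ ({c, d} : Finset (Fin N)) := by rw [← h]; simp
    simpa using this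
  have hab' : a.val < b.val := hab
  have hcd' : c.val < d.val := hcd
  have hav : a.val = c.val ∨ a.val = d.val := by
    rcases ha with h' | h' <;> simp [h']
  have hbv : b.val = c.val ∨ b.val = d.val := by
    rcases hb with h' | h' <;> simp [h']
  constructor <;> (apply Fin.ext; omega)

lemma apex (T : Triangulation N) {i j : Fin N} (hij : IsEdge T i j)
    (hlt : i.val + 1 < j.val) :
    ∃ k : Fin N, i < k ∧ k < j ∧ IsEdge T i k ∧ IsEdge T k j ∧
      IsTriangle T {i, k, j} := by
  classical
  have hjN : j.val < N := j.isLt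
  set K : Finset (Fin N) :=
    Finset.univ.filter (fun k => i < k ∧ k < j ∧ IsEdge T i k) with hK
  have hne : K.Nonempty := by
    refine ⟨⟨i.val + 1, by omega⟩, ?_⟩
    rw [hK, Finset.mem_filter]
    refine ⟨Finset.mem_univ _, ?_, ?_, ?_⟩
    · show i.val < i.val + 1; omega
    · show i.val + 1 < j.val; omega
    · exact ⟨by intro h; have := congrArg Fin.val h; simp at this,
        Or.inl (Or.inl (Nat.mod_eq_of_lt (by omega)))⟩
  set k : Fin N := K.max' hne with hk
  have hkmem : k ∈ K := K.max'_mem hne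
  rw [hK, Finset.mem_filter] at hkmem
  obtain ⟨-, hik, hkj, eik⟩ := hkmem
  have hik' : i.val < k.val := hik
  have hkj' : k.val < j.val := hkj
  have ekj : IsEdge T k j := by
    by_contra hkjE
    have hk2 : k.val + 2 ≤ j.val := by
      by_contra h'
      have hj1 : j.val = k.val + 1 := by omega
      exact hkjE ⟨by intro h; have := congrArg Fin.val h; omega,
        Or.inl (Or.inl (by rw [Nat.mod_eq_of_lt (by omega)]; omega))⟩
    have hdiag : IsDiag N ({k, j} : Finset (Fin N)) := by
      refine ⟨k, j, by intro h; have := congrArg Fin.val h; omega, ?_, rfl⟩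
      rintro (h | h)
      · rw [Nat.mod_eq_of_lt (by omega)] at h; omega
      · rcases Nat.lt_or_ge (j.val + 1) N with h' | h'
        · rw [Nat.mod_eq_of_lt h'] at h; omega
        · have hj1 : j.val + 1 = N := by omega
          rw [hj1, Nat.mod_self] at h; omega
    have hnotmem : ({k, j} : Finset (Fin N)) ∉ T.diags := by
      intro hmem
      exact hkjE ⟨by intro h; have := congrArg Fin.val h; omega, Or.inr hmem⟩
    obtain ⟨e, he, hcre⟩ :
        ∃ e ∈ T.diags, Crosses ({k, j} : Finset (Fin N)) e ∨ Crosses e {k, j} := by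
      by_contra hc
      push_neg at hc
      exact hnotmem (T.maximal _ hdiag hc)
    rcases hcre with hcre | hcre
    · obtain ⟨A, B, C, F, h1, h2, hAC, hCB, hBF⟩ := hcre
      obtain ⟨hA, hB⟩ := pair_eq hkj (hAC.trans hCB) h1
      subst hA; subst hB
      have eCF : IsEdge T C F :=
        ⟨ne_of_lt (hCB.trans hBF), Or.inr (by rw [← h2]; exact he)⟩
      exact no_cross T (hik.trans hAC) hCB hBF hij eCF
    · obtain ⟨A, B, C, F, h1, h2, hAC, hCB, hBF⟩ := hcre
      obtain ⟨hC, hF⟩ := pair_eq hkj (hCB.trans hBF) h2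
      subst hC; subst hF
      have eAB : IsEdge T A B :=
        ⟨ne_of_lt (hAC.trans hCB), Or.inr (by rw [← h1]; exact he)⟩
      rcases lt_trichotomy A i with h' | h' | h'
      · exact no_cross T h' (hik.trans hCB) hBF eAB hij
      · subst h'
        have hBK : B ∈ K := by
          rw [hK, Finset.mem_filter]
          exact ⟨Finset.mem_univ _, hAC.trans hCB, hBF, eAB⟩
        exact absurd (K.le_max' B hBK) (not_le.mpr hCB)
      · exact no_cross T h' hAC hCB eik eAB
  refine ⟨k, hik, hkj, eik, ekj, i, k, j, ne_of_lt hik, ne_of_lt (hik.trans hkj),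
    ne_of_lt hkj, rfl, eik, hij, ekj⟩

lemma tri_subset (T : Triangulation N) {i j x : Fin N} (hij : IsEdge T i j)
    (hix : i < x) (hxj : x < j) {t : Finset (Fin N)} (ht : IsTriangle T t)
    (hx : x ∈ t) : t ⊆ Finset.Icc i j := by
  intro y hy
  rw [Finset.mem_Icc]
  rcases lt_or_ge y i with h1 | h1
  · exact (no_cross T h1 hix hxj
      (tri_edge T ht hy hx (ne_of_lt (h1.trans hix))) hij).elim
  · rcases le_or_gt y j with h2 | h2
    · exact ⟨h1, h2⟩
    · exact (no_cross T hix hxj h2 hij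
        (tri_edge T ht hx hy (ne_of_lt (hxj.trans h2)))).elim

lemma tri_split (T : Triangulation N) {i k j : Fin N} (hik : i < k) (hkj : k < j)
    (eik : IsEdge T i k) (ekj : IsEdge T k j)
    {t : Finset (Fin N)} (ht : IsTriangle T t) (hsub : t ⊆ Finset.Icc i j)
    (hne : t ≠ ({i, k, j} : Finset (Fin N))) :
    t ⊆ Finset.Icc i k ∨ t ⊆ Finset.Icc k j := by
  by_contra h
  obtain ⟨h1, h2⟩ := not_or.mp h
  obtain ⟨v, hvt, hv⟩ := Finset.not_subset.mp h1
  obtain ⟨u, hut, hu⟩ := Finset.not_subset.mp h2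
  have hvIcc := Finset.mem_Icc.mp (hsub hvt)
  have huIcc := Finset.mem_Icc.mp (hsub hut)
  have hkv : k < v := by
    rcases lt_or_ge k v with h' | h'
    · exact h'
    · exact absurd (Finset.mem_Icc.mpr ⟨hvIcc.1, h'⟩) hv
  have huk : u < k := by
    rcases lt_or_ge u k with h' | h'
    · exact h'
    · exact absurd (Finset.mem_Icc.mpr ⟨h', huIcc.2⟩) hu
  have huv : u ≠ v := ne_of_lt (huk.trans hkv)
  have euv : IsEdge T u v := tri_edge T ht hut hvt huv
  rcases huIcc.1.lt_or_eq with hiu | hiu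
  · exact no_cross T hiu huk hkv eik euv
  · -- i = u : work with explicit equalities instead of subst
    rcases hvIcc.2.lt_or_eq with hvj | hvj
    · exact no_cross T (hiu ▸ hik) hkv hvj euv ekj
    · -- v = j
      have hut' : i ∈ t := hiu ▸ hut
      have hvt' : j ∈ t := hvj ▸ hvt
      have hivne : i ≠ j := ne_of_lt (hik.trans hkj)
      have hijt : ({i, j} : Finset (Fin N)) ⊆ t := by
        intro x hx
        simp only [Finset.mem_insert, Finset.mem_singleton] at hx
        rcases hx with rfl | rfl
        exacts [hut', hvt']
      have hcard : t.card = 3 := tri_card T ht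
      have hcard2 : ({i, j} : Finset (Fin N)).card = 2 := Finset.card_pair hivne
      have hsd : (t \ {i, j}).Nonempty := by
        rw [← Finset.card_pos, Finset.card_sdiff_of_subset hijt, hcard, hcard2]
        omega
      obtain ⟨w, hw⟩ := hsd
      rw [Finset.mem_sdiff] at hw
      obtain ⟨hwt, hw2⟩ := hw
      simp only [Finset.mem_insert, Finset.mem_singleton, not_or] at hw2
      obtain ⟨hwu, hwv⟩ := hw2
      have hwIcc := Finset.mem_Icc.mp (hsub hwt)
      have huw : i < w := lt_of_le_of_ne hwIcc.1 (Ne.symm hwu)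
      have hwj : w < j := lt_of_le_of_ne hwIcc.2 hwv
      rcases lt_trichotomy w k with h' | h' | h'
      · exact no_cross T huw h' hkj eik (tri_edge T ht hwt hvt' (ne_of_lt hwj))
      · refine hne ?_
        have hsub2 : ({i, k, j} : Finset (Fin N)) ⊆ t := by
          intro x hx
          simp only [Finset.mem_insert, Finset.mem_singleton] at hx
          rcases hx with rfl | rfl | rfl
          exacts [hut', h' ▸ hwt, hvt']
        have hcard3 : ({i, k, j} : Finset (Fin N)).card = 3 :=
          Finset.card_eq_three.mpr
            ⟨i, k, j, ne_of_lt hik, hivne, ne_of_lt hkj, rfl⟩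
        exact (Finset.eq_of_subset_of_card_le hsub2 (by omega)).symm
      · exact no_cross T hik h' hwj (tri_edge T ht hut' hwt (ne_of_lt huw)) ekj

lemma key (T : Triangulation N)
    [Fintype {t : Finset (Fin N) // IsTriangle T t}]
    (d : {t : Finset (Fin N) // IsTriangle T t} → ZMod 3)
    (hw : ∀ x : Fin N,
      (∑ t : {t : Finset (Fin N) // IsTriangle T t},
        (if x ∈ t.val then d t else 0)) = 0) :
    ∀ (m : ℕ) (i j : Fin N), j.val - i.val ≤ m → i < j → IsEdge T i j →
      ∀ t : {t : Finset (Fin N) // IsTriangle T t},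
        t.val ⊆ Finset.Icc i j → d t = 0 := by
  intro m
  induction m with
  | zero =>
    intro i j hm hij _ t _
    have : i.val < j.val := hij
    omega
  | succ m ih =>
    intro i j hm hij hedge t htsub
    have hij' : i.val < j.val := hij
    by_cases hdeg : i.val + 1 < j.val
    · obtain ⟨k, hik, hkj, eik, ekj, htri⟩ := apex T hedge hdeg
      have hik' : i.val < k.val := hik
      have hkj' : k.val < j.val := hkj
      set t0 : {t : Finset (Fin N) // IsTriangle T t} := ⟨{i, k, j}, htri⟩ with ht0
      have hub : ∀ s : {t : Finset (Fin N) // IsTriangle T t},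
          s.val ⊆ Finset.Icc i j → s.val ≠ ({i, k, j} : Finset (Fin N)) → d s = 0 := by
        intro s hsub hsne
        rcases tri_split T hik hkj eik ekj s.2 hsub hsne with h | h
        · exact ih i k (by omega) hik eik s h
        · exact ih k j (by omega) hkj ekj s h
      have h0 : d t0 = 0 := by
        have hwk := hw k
        rw [Finset.sum_eq_single t0] at hwk
        · rw [if_pos (by rw [ht0]; simp)] at hwk
          exact hwk
        · intro s _ hs
          by_cases hks : k ∈ s.val
          · rw [if_pos hks]
            have hsub : s.val ⊆ Finset.Icc i j :=
              tri_subset T hedge hik hkj s.2 hks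
            have hsne : s.val ≠ ({i, k, j} : Finset (Fin N)) := by
              intro h'
              exact hs (Subtype.ext h')
            exact hub s hsub hsne
          · rw [if_neg hks]
        · intro h'
          exact absurd (Finset.mem_univ t0) h'
      by_cases hts : t.val = ({i, k, j} : Finset (Fin N))
      · rw [show t = t0 from Subtype.ext hts]
        exact h0
      · exact hub t htsub hts
    · -- j = i + 1 : no triangle fits in a 2-element interval
      have hcard : t.val.card = 3 := tri_card T t.2
      have hle : t.val.card ≤ (Finset.Icc i j).card := Finset.card_le_card htsub
      rw [Fin.card_Icc] at hle
      omega

lemma signVal_injective : Function.Injective signVal := by decide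

end Uniqueness

/-- Given a triangulation `T` of a convex `(n+2)`-gon and a weighting
`p : vertices → ZMod 3`, there is at most one 2-colouring of the triangles of `T`
whose weighting is `p`. -/
theorem colouring_unique_given_weighting (n : ℕ) (hn : 1 ≤ n)
    (T : Triangulation (n + 2)) (p : Fin (n + 2) → ZMod 3)
    (s₁ s₂ : {t : Finset (Fin (n + 2)) // IsTriangle T t} → Fin 2)
    (h₁ : ∀ x, weight ⟨T, s₁⟩ x = p x) (h₂ : ∀ x, weight ⟨T, s₂⟩ x = p x) :
    s₁ = s₂ := by
  classical
  have hfin : Fintype {t : Finset (Fin (n + 2)) // IsTriangle T t} :=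
    Fintype.ofFinite _
  set d : {t : Finset (Fin (n + 2)) // IsTriangle T t} → ZMod 3 :=
    fun t => signVal (s₁ t) - signVal (s₂ t) with hd
  have hw : ∀ x : Fin (n + 2),
      (∑ t : {t : Finset (Fin (n + 2)) // IsTriangle T t},
        (if x ∈ t.val then d t else 0)) = 0 := by
    intro x
    have e1 : (∑ t : {t : Finset (Fin (n + 2)) // IsTriangle T t},
        (if x ∈ t.val then signVal (s₁ t) else 0)) = p x := by
      have := h₁ x
      rw [weight, finsum_eq_sum_of_fintype] at this
      exact this
    have e2 : (∑ t : {t : Finset (Fin (n + 2)) // IsTriangle T t},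
        (if x ∈ t.val then signVal (s₂ t) else 0)) = p x := by
      have := h₂ x
      rw [weight, finsum_eq_sum_of_fintype] at this
      exact this
    have : (∑ t : {t : Finset (Fin (n + 2)) // IsTriangle T t},
        (if x ∈ t.val then d t else 0))
        = (∑ t : {t : Finset (Fin (n + 2)) // IsTriangle T t},
            (if x ∈ t.val then signVal (s₁ t) else 0))
          - (∑ t : {t : Finset (Fin (n + 2)) // IsTriangle T t},
            (if x ∈ t.val then signVal (s₂ t) else 0)) := by
      rw [← Finset.sum_sub_distrib]
      refine Finset.sum_congr rfl ?_
      intro t _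
      by_cases h : x ∈ t.val <;> simp [h, hd]
    rw [this, e1, e2, sub_self]
  set j : Fin (n + 2) := ⟨n + 1, by omega⟩ with hj
  have hij : (0 : Fin (n + 2)) < j := by
    rw [Fin.lt_def]
    simp [hj]
  have hedge : IsEdge T 0 j := by
    refine ⟨?_, Or.inl (Or.inr ?_)⟩
    · intro h
      have := congrArg Fin.val h
      simp [hj] at this
    · show (j.val + 1) % (n + 2) = (0 : Fin (n + 2)).val
      simp [hj]
  funext t
  have h0 : d t = 0 := by
    refine key T d hw (n + 2) 0 j (by simp [hj]) hij hedge t ?_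
    intro x _
    rw [Finset.mem_Icc]
    refine ⟨Fin.zero_le x, ?_⟩
    show x.val ≤ j.val
    have := x.isLt
    simp [hj]
    omega
  rw [hd] at h0
  have := sub_eq_zero.mp h0
  exact signVal_injective this

end PolyFlip
end

section
/- Let T be a 2-coloured triangulation of a convex polygon with k > 1 diagonals that can each be 2-coloured flipped and whose associated quadrilaterals are pairwise disjoint (sharing at most a diagonal). Then the connected component of T in the 2-coloured flip graph contains a subgraph isomorphic to the k-dimensional hypercube graph. -/
namespace PolyFlip


/-! ### Auxiliary development -/

variable {N : ℕ}

/-- Symmetric crossing relation. -/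
def Cross2 {N : ℕ} (d e : Finset (Fin N)) : Prop := Crosses d e ∨ Crosses e d

lemma crosses_mk {p q r s : Fin N} (h1 : p < q) (h2 : q < r) (h3 : r < s) :
    Crosses ({p, r} : Finset (Fin N)) {q, s} := ⟨p, r, q, s, rfl, rfl, h1, h2, h3⟩

lemma pair_eq_iff {α : Type*} [DecidableEq α] {a b c d : α} (hab : a ≠ b)
    (h : ({a, b} : Finset α) = {c, d}) : (a = c ∧ b = d) ∨ (a = d ∧ b = c) := by
  have ha : a ∈ ({c, d} : Finset α) := by rw [← h]; simp
  have hb : b ∈ ({c, d} : Finset α) := by rw [← h]; simp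
  have hc : c ∈ ({a, b} : Finset α) := by rw [h]; simp
  simp only [Finset.mem_insert, Finset.mem_singleton] at ha hb hc
  rcases ha with rfl | rfl
  · rcases hb with rfl | rfl
    · rcases hc with h' | h' <;> simp_all
    · exact Or.inl ⟨rfl, rfl⟩
  · rcases hb with rfl | rfl
    · exact Or.inr ⟨rfl, rfl⟩
    · rcases hc with h' | h' <;> simp_all

lemma mod_succ_cases {m n M : ℕ} (h : (m + 1) % M = n) (hm : m < M) :
    n = m + 1 ∨ (m + 1 = M ∧ n = 0) := by
  rcases Nat.lt_or_ge (m + 1) M with h' | h'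
  · left; rw [Nat.mod_eq_of_lt h'] at h; omega
  · right
    have hM : m + 1 = M := by omega
    subst hM
    rw [Nat.mod_self] at h; omega

lemma not_crosses_left_of_bdry {a b : Fin N} (h : BdryAdj N a b) (e : Finset (Fin N)) :
    ¬ Crosses ({a, b} : Finset (Fin N)) e := by
  rintro ⟨p, q, r, s, hd, he, h1, h2, h3⟩
  have hpq : p ≠ q := (h1.trans h2).ne
  have hpq' : p < q := (h1.trans h2)
  have hab : a ≠ b := by
    rintro rfl
    have hp : p ∈ ({a, a} : Finset (Fin N)) := by rw [hd]; simp
    have hq : q ∈ ({a, a} : Finset (Fin N)) := by rw [hd]; simp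
    simp only [Finset.mem_insert, Finset.mem_singleton, or_self] at hp hq
    exact hpq (hp.trans hq.symm)
  have hsN : s.val < N := s.isLt
  have h1' : p.val < r.val := h1
  have h2' : r.val < q.val := h2
  have h3' : q.val < s.val := h3
  rcases pair_eq_iff hab hd with ⟨rfl, rfl⟩ | ⟨rfl, rfl⟩ <;>
    rcases h with h | h <;>
      rcases mod_succ_cases h (Fin.isLt _) with h' | ⟨h', h''⟩ <;> omega

lemma not_crosses_right_of_bdry {a b : Fin N} (h : BdryAdj N a b) (e : Finset (Fin N)) :
    ¬ Crosses e ({a, b} : Finset (Fin N)) := by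
  rintro ⟨p, q, r, s, hd, he, h1, h2, h3⟩
  have hrs : r ≠ s := (h2.trans h3).ne
  have hab : a ≠ b := by
    rintro rfl
    have hr : r ∈ ({a, a} : Finset (Fin N)) := by rw [he]; simp
    have hs : s ∈ ({a, a} : Finset (Fin N)) := by rw [he]; simp
    simp only [Finset.mem_insert, Finset.mem_singleton, or_self] at hr hs
    exact hrs (hr.trans hs.symm)
  have hsN : s.val < N := s.isLt
  have hqN : q.val < N := q.isLt
  have h1' : p.val < r.val := h1
  have h2' : r.val < q.val := h2
  have h3' : q.val < s.val := h3
  rcases pair_eq_iff hab he with ⟨rfl, rfl⟩ | ⟨rfl, rfl⟩ <;>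
    rcases h with h | h <;>
      rcases mod_succ_cases h (Fin.isLt _) with h' | ⟨h', h''⟩ <;> omega

lemma not_cross2_of_bdry {a b : Fin N} (h : BdryAdj N a b) (e : Finset (Fin N)) :
    ¬ Cross2 ({a, b} : Finset (Fin N)) e := by
  rintro (h' | h')
  · exact not_crosses_left_of_bdry h e h'
  · exact not_crosses_right_of_bdry h e h'

lemma not_crosses_self (d : Finset (Fin N)) : ¬ Crosses d d := by
  rintro ⟨p, q, r, s, hd, he, h1, h2, h3⟩
  have hpq : p ≠ q := (h1.trans h2).ne
  rcases pair_eq_iff hpq (hd.symm.trans he) with ⟨rfl, rfl⟩ | ⟨rfl, rfl⟩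
  · exact absurd h1 (lt_irrefl _)
  · exact absurd (h1.trans h2) (by
      intro hh
      exact absurd (h2.trans h3) (asymm hh))

lemma IsEdge.symm' {T : Triangulation N} {a b : Fin N} (h : IsEdge T a b) : IsEdge T b a := by
  refine ⟨h.1.symm, ?_⟩
  rcases h.2 with h' | h'
  · exact Or.inl h'.symm
  · right; rwa [Finset.pair_comm]

lemma triangle_edge {T : Triangulation N} {t : Finset (Fin N)} (h : IsTriangle T t)
    {p q : Fin N} (hp : p ∈ t) (hq : q ∈ t) (hpq : p ≠ q) : IsEdge T p q := by
  obtain ⟨a, b, c, hab, hac, hbc, rfl, e1, e2, e3⟩ := h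
  simp only [Finset.mem_insert, Finset.mem_singleton] at hp hq
  rcases hp with rfl | rfl | rfl <;> rcases hq with rfl | rfl | rfl <;>
    first
      | exact absurd rfl hpq
      | exact e1 | exact e2 | exact e3
      | exact e1.symm' | exact e2.symm' | exact e3.symm'

lemma no_cross_edges {T : Triangulation N} {p q r s : Fin N}
    (h1 : IsEdge T p q) (h2 : IsEdge T r s) :
    ¬ Crosses ({p, q} : Finset (Fin N)) {r, s} := by
  rintro ⟨α, β, γ, δ, hd, he, hab, hbc, hcd⟩
  have e1 : IsEdge T α β := by
    rcases pair_eq_iff h1.1 hd with ⟨h, h'⟩ | ⟨h, h'⟩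
    · subst h; subst h'; exact h1
    · subst h; subst h'; exact h1.symm'
  have e2 : IsEdge T γ δ := by
    rcases pair_eq_iff h2.1 he with ⟨h, h'⟩ | ⟨h, h'⟩
    · subst h; subst h'; exact h2
    · subst h; subst h'; exact h2.symm'
  have hcr : Crosses ({α, β} : Finset (Fin N)) {γ, δ} := crosses_mk hab hbc hcd
  rcases e1.2 with hb | hm
  · exact not_crosses_left_of_bdry hb _ hcr
  · rcases e2.2 with hb2 | hm2
    · exact not_crosses_right_of_bdry hb2 _ hcr
    · exact T.noncross _ hm _ hm2 hcr

lemma no_cross2_edges {T : Triangulation N} {p q r s : Fin N}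
    (h1 : IsEdge T p q) (h2 : IsEdge T r s) :
    ¬ Cross2 ({p, q} : Finset (Fin N)) {r, s} := by
  rintro (h | h)
  · exact no_cross_edges h1 h2 h
  · exact no_cross_edges h2 h1 h

lemma not_both_inside {T : Triangulation N} {a b u v : Fin N} (huv : u ≠ v)
    (hau : IsEdge T a u) (hbu : IsEdge T b u) (hav : IsEdge T a v) (hbv : IsEdge T b v)
    (h1 : a < u) (h2 : u < b) (h3 : a < v) (h4 : v < b) : False := by
  rcases lt_trichotomy u v with h | h | h
  · exact no_cross_edges hav (hbu.symm') (crosses_mk h1 h h4)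
  · exact huv h
  · exact no_cross_edges hau (hbv.symm') (crosses_mk h3 h h2)

lemma not_both_outside {T : Triangulation N} {a b u v : Fin N} (hab : a < b) (huv : u ≠ v)
    (hau : IsEdge T a u) (hbu : IsEdge T b u) (hav : IsEdge T a v) (hbv : IsEdge T b v)
    (hu : u < a ∨ b < u) (hv : v < a ∨ b < v) : False := by
  rcases hu with hu | hu <;> rcases hv with hv | hv
  · rcases lt_trichotomy u v with h | h | h
    · exact no_cross_edges hau.symm' hbv.symm' (crosses_mk h hv hab)
    · exact huv h
    · exact no_cross_edges hav.symm' hbu.symm' (crosses_mk h hu hab)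
  · exact no_cross_edges hbu.symm' hav (crosses_mk hu hab hv)
  · exact no_cross_edges hbv.symm' hau (crosses_mk hv hab hu)

  · rcases lt_trichotomy u v with h | h | h
    · exact no_cross_edges hau hbv (crosses_mk hab hu h)
    · exact huv h
    · exact no_cross_edges hav hbu (crosses_mk hab hv h)

lemma opp_side {T : Triangulation N} {a b u v : Fin N} (hab : a < b) (huv : u ≠ v)
    (hua : u ≠ a) (hub : u ≠ b) (hva : v ≠ a) (hvb : v ≠ b)
    (hau : IsEdge T a u) (hbu : IsEdge T b u) (hav : IsEdge T a v) (hbv : IsEdge T b v) :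
    (a < u ∧ u < b ∧ (v < a ∨ b < v)) ∨ (a < v ∧ v < b ∧ (u < a ∨ b < u)) := by
  have hupos : (a < u ∧ u < b) ∨ (u < a ∨ b < u) := by
    rcases lt_trichotomy u a with h | h | h
    · exact Or.inr (Or.inl h)
    · exact absurd h hua
    · rcases lt_trichotomy u b with h' | h' | h'
      · exact Or.inl ⟨h, h'⟩
      · exact absurd h' hub
      · exact Or.inr (Or.inr h')
  have hvpos : (a < v ∧ v < b) ∨ (v < a ∨ b < v) := by
    rcases lt_trichotomy v a with h | h | h
    · exact Or.inr (Or.inl h)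
    · exact absurd h hva
    · rcases lt_trichotomy v b with h' | h' | h'
      · exact Or.inl ⟨h, h'⟩
      · exact absurd h' hvb
      · exact Or.inr (Or.inr h')
  rcases hupos with ⟨h1, h2⟩ | ho
  · rcases hvpos with ⟨h3, h4⟩ | ho'
    · exact absurd (not_both_inside huv hau hbu hav hbv h1 h2 h3 h4) (fun h => h)
    · exact Or.inl ⟨h1, h2, ho'⟩
  · rcases hvpos with ⟨h3, h4⟩ | ho'
    · exact Or.inr ⟨h3, h4, ho⟩
    · exact absurd (not_both_outside hab huv hau hbu hav hbv ho ho') (fun h => h)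

lemma exit_core {a b x y : Fin N} {e : Finset (Fin N)}
    (hab : a < b) (hx1 : a < x) (hx2 : x < b) (hy : y < a ∨ b < y)
    (hce : Cross2 e ({a, b} : Finset (Fin N)))
    (s1 : ¬ Cross2 e ({a, x} : Finset (Fin N))) (s2 : ¬ Cross2 e ({x, b} : Finset (Fin N)))
    (s3 : ¬ Cross2 e ({a, y} : Finset (Fin N))) (s4 : ¬ Cross2 e ({b, y} : Finset (Fin N))) :
    e = ({x, y} : Finset (Fin N)) := by
  have key : ∃ w z : Fin N, e = {w, z} ∧ a < w ∧ w < b ∧ (z < a ∨ b < z) := by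
    rcases hce with h | h
    · obtain ⟨p, q, r, s, hd, he, h1, h2, h3⟩ := h
      rcases pair_eq_iff hab.ne he with ⟨rfl, rfl⟩ | ⟨h', h''⟩
      · exact ⟨q, p, by rw [hd, Finset.pair_comm], h2, h3, Or.inl h1⟩
      · exfalso; subst h'; subst h''; exact absurd (h2.trans h3) (asymm hab)
    · obtain ⟨p, q, r, s, hd, he, h1, h2, h3⟩ := h
      rcases pair_eq_iff hab.ne hd with ⟨rfl, rfl⟩ | ⟨h', h''⟩
      · exact ⟨r, s, he, h1, h2, Or.inr h3⟩
      · exfalso; subst h'; subst h''; exact absurd (h1.trans h2) (asymm hab)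
  obtain ⟨w, z, rfl, hw1, hw2, hz⟩ := key
  have hwx : x = w := by
    by_contra hne
    rcases lt_trichotomy w x with h | h | h
    · rcases hz with hz | hz
      · apply s1; left; rw [Finset.pair_comm w z]; exact crosses_mk hz hw1 h
      · exact s1 (Or.inr (crosses_mk hw1 h (hx2.trans hz)))
    · exact hne h.symm
    · rcases hz with hz | hz
      · apply s2; left; rw [Finset.pair_comm w z]; exact crosses_mk (hz.trans hx1) h hw2
      · exact s2 (Or.inr (crosses_mk h hw2 hz))
  subst hwx
  have hzy : y = z := by
    by_contra hne
    rcases hz with hz | hz <;> rcases hy with hy | hy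
    · rcases lt_trichotomy z y with h | h | h
      · apply s4; left; rw [Finset.pair_comm x z, Finset.pair_comm b y]
        exact crosses_mk h (hy.trans hx1) hx2
      · exact hne h.symm
      · apply s3; right; rw [Finset.pair_comm a y, Finset.pair_comm x z]
        exact crosses_mk h hz hx1
    · apply s3; left; rw [Finset.pair_comm x z]; exact crosses_mk hz hx1 (hx2.trans hy)
    · apply s4; right; rw [Finset.pair_comm b y]; exact crosses_mk (hy.trans hx1) hx2 hz
    · rcases lt_trichotomy z y with h | h | h
      · exact s4 (Or.inl (crosses_mk hx2 hz h))
      · exact hne h.symm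
      · exact s3 (Or.inr (crosses_mk hx1 (hx2.trans hy) h))
  subst hzy
  rfl

lemma cross2_comm {d e : Finset (Fin N)} : Cross2 d e ↔ Cross2 e d := or_comm

lemma triangle_card {T : Triangulation N} {t : Finset (Fin N)} (h : IsTriangle T t) :
    t.card = 3 := by
  obtain ⟨a, b, c, hab, hac, hbc, rfl, -, -, -⟩ := h
  rw [Finset.card_insert_of_notMem (by simp [hab, hac]),
    Finset.card_insert_of_notMem (by simp [hbc]), Finset.card_singleton]

/-- The extracted data for the `k` pairwise-disjoint flippable quadrilaterals. -/
structure FD (N k : ℕ) (C : ColouredTri N 2) where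
  a : Fin k → Fin N
  b : Fin k → Fin N
  x : Fin k → Fin N
  y : Fin k → Fin N
  hab : ∀ i, a i < b i
  hx1 : ∀ i, a i < x i
  hx2 : ∀ i, x i < b i
  hy : ∀ i, y i < a i ∨ b i < y i
  hD : ∀ i, ({a i, b i} : Finset (Fin N)) ∈ C.T.diags
  h1 : ∀ i, IsTriangle C.T {a i, b i, x i}
  h2 : ∀ i, IsTriangle C.T {a i, b i, y i}
  hcol : ∀ i, C.col ⟨{a i, b i, x i}, h1 i⟩ = C.col ⟨{a i, b i, y i}, h2 i⟩
  hdisj : ∀ i j, i ≠ j →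
    (({a i, b i, x i, y i} : Finset (Fin N)) ∩ {a j, b j, x j, y j}).card ≤ 2

namespace FD

variable {k : ℕ} {C : ColouredTri N 2} (d : FD N k C)

def quad (i : Fin k) : Finset (Fin N) := {d.a i, d.b i, d.x i, d.y i}

lemma hax (i : Fin k) : d.a i ≠ d.x i := (d.hx1 i).ne
lemma hxb (i : Fin k) : d.x i ≠ d.b i := (d.hx2 i).ne
lemma hay (i : Fin k) : d.a i ≠ d.y i := by
  rcases d.hy i with h | h
  · exact h.ne'
  · exact ((d.hab i).trans h).ne
lemma hby (i : Fin k) : d.b i ≠ d.y i := by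
  rcases d.hy i with h | h
  · exact (h.trans (d.hab i)).ne'
  · exact h.ne
lemma hxy (i : Fin k) : d.x i ≠ d.y i := by
  rcases d.hy i with h | h
  · exact ((h.trans (d.hx1 i))).ne'
  · exact ((d.hx2 i).trans h).ne

lemma edge_ab (i : Fin k) : IsEdge C.T (d.a i) (d.b i) :=
  triangle_edge (d.h1 i) (by simp) (by simp) (d.hab i).ne
lemma edge_ax (i : Fin k) : IsEdge C.T (d.a i) (d.x i) :=
  triangle_edge (d.h1 i) (by simp) (by simp) (d.hax i)
lemma edge_bx (i : Fin k) : IsEdge C.T (d.b i) (d.x i) :=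
  triangle_edge (d.h1 i) (by simp) (by simp) (d.hxb i).symm
lemma edge_ay (i : Fin k) : IsEdge C.T (d.a i) (d.y i) :=
  triangle_edge (d.h2 i) (by simp) (by simp) (d.hay i)
lemma edge_by (i : Fin k) : IsEdge C.T (d.b i) (d.y i) :=
  triangle_edge (d.h2 i) (by simp) (by simp) (d.hby i)

lemma cross2_xy_ab (i : Fin k) :
    Cross2 ({d.x i, d.y i} : Finset (Fin N)) {d.a i, d.b i} := by
  rcases d.hy i with h | h
  · left; rw [Finset.pair_comm (d.x i) (d.y i)]
    exact crosses_mk h (d.hx1 i) (d.hx2 i)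
  · right; exact crosses_mk (d.hx1 i) (d.hx2 i) h

lemma xy_not_edge (i : Fin k) : ¬ IsEdge C.T (d.x i) (d.y i) := fun h =>
  no_cross2_edges h (d.edge_ab i) (d.cross2_xy_ab i)

lemma xy_not_bdry (i : Fin k) : ¬ BdryAdj N (d.x i) (d.y i) := fun h =>
  d.xy_not_edge i ⟨d.hxy i, Or.inl h⟩

lemma xy_not_diag (i : Fin k) : ({d.x i, d.y i} : Finset (Fin N)) ∉ C.T.diags := fun h =>
  d.xy_not_edge i ⟨d.hxy i, Or.inr h⟩

lemma xy_isDiag (i : Fin k) : IsDiag N ({d.x i, d.y i} : Finset (Fin N)) :=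
  ⟨d.x i, d.y i, d.hxy i, d.xy_not_bdry i, rfl⟩

lemma subset_quad_absurd {i j : Fin k} (hij : i ≠ j) {t : Finset (Fin N)}
    (h3 : 3 ≤ t.card) (hi : t ⊆ d.quad i) (hj : t ⊆ d.quad j) : False := by
  have h := d.hdisj i j hij
  have := Finset.card_le_card (Finset.subset_inter hi hj)
  simp only [quad] at this
  omega

/-- the four sides of quadrilateral `i`, applied to `exit_core`. -/
lemma exit_D {i : Fin k} {e : Finset (Fin N)}
    (hc : Cross2 e ({d.a i, d.b i} : Finset (Fin N)))
    (s1 : ¬ Cross2 e ({d.a i, d.x i} : Finset (Fin N)))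
    (s2 : ¬ Cross2 e ({d.x i, d.b i} : Finset (Fin N)))
    (s3 : ¬ Cross2 e ({d.a i, d.y i} : Finset (Fin N)))
    (s4 : ¬ Cross2 e ({d.b i, d.y i} : Finset (Fin N))) :
    e = ({d.x i, d.y i} : Finset (Fin N)) :=
  exit_core (d.hab i) (d.hx1 i) (d.hx2 i) (d.hy i) hc s1 s2 s3 s4

lemma exit_XY {i : Fin k} {e : Finset (Fin N)}
    (hc : Cross2 e ({d.x i, d.y i} : Finset (Fin N)))
    (s1 : ¬ Cross2 e ({d.a i, d.x i} : Finset (Fin N)))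
    (s2 : ¬ Cross2 e ({d.x i, d.b i} : Finset (Fin N)))
    (s3 : ¬ Cross2 e ({d.a i, d.y i} : Finset (Fin N)))
    (s4 : ¬ Cross2 e ({d.b i, d.y i} : Finset (Fin N))) :
    e = ({d.a i, d.b i} : Finset (Fin N)) := by
  rcases d.hy i with h | h
  · have := exit_core (a := d.y i) (b := d.x i) (x := d.a i) (y := d.b i)
      (h.trans (d.hx1 i)) h (d.hx1 i) (Or.inr (d.hx2 i))
      (by rwa [Finset.pair_comm (d.x i) (d.y i)] at hc)
      (by rwa [Finset.pair_comm (d.a i) (d.y i)] at s3)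
      s1
      (by rwa [Finset.pair_comm (d.b i) (d.y i)] at s4)
      s2
    exact this
  · have := exit_core (a := d.x i) (b := d.y i) (x := d.b i) (y := d.a i)
      ((d.hx2 i).trans h) (d.hx2 i) h (Or.inl (d.hx1 i))
      hc
      s2 s4
      (by rwa [Finset.pair_comm (d.a i) (d.x i)] at s1)
      (by rwa [Finset.pair_comm (d.a i) (d.y i)] at s3)
    rw [this, Finset.pair_comm]

lemma tri_abx_card (i : Fin k) : ({d.a i, d.b i, d.x i} : Finset (Fin N)).card = 3 :=
  triangle_card (d.h1 i)

lemma tri_sub_quad1 (i : Fin k) : ({d.a i, d.b i, d.x i} : Finset (Fin N)) ⊆ d.quad i := by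
  intro z hz
  simp only [Finset.mem_insert, Finset.mem_singleton] at hz
  simp only [quad, Finset.mem_insert, Finset.mem_singleton]
  tauto

lemma tri_sub_quad2 (i : Fin k) : ({d.a i, d.b i, d.y i} : Finset (Fin N)) ⊆ d.quad i := by
  intro z hz
  simp only [Finset.mem_insert, Finset.mem_singleton] at hz
  simp only [quad, Finset.mem_insert, Finset.mem_singleton]
  tauto

lemma D_ne_D {i j : Fin k} (hij : i ≠ j) :
    ({d.a i, d.b i} : Finset (Fin N)) ≠ {d.a j, d.b j} := by
  intro h
  rcases pair_eq_iff (d.hab i).ne h with ⟨h1, h2⟩ | ⟨h1, h2⟩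
  · by_cases hxx : d.x i = d.x j
    · refine d.subset_quad_absurd hij (t := {d.a i, d.b i, d.x i})
        (by rw [d.tri_abx_card i]) (d.tri_sub_quad1 i) ?_
      intro z hz
      simp only [Finset.mem_insert, Finset.mem_singleton] at hz
      simp only [quad, Finset.mem_insert, Finset.mem_singleton]
      rcases hz with rfl | rfl | rfl
      · exact Or.inl h1
      · exact Or.inr (Or.inl h2)
      · exact Or.inr (Or.inr (Or.inl hxx))
    · have e1 : IsEdge C.T (d.a i) (d.x j) := by rw [h1]; exact d.edge_ax j
      have e2 : IsEdge C.T (d.b i) (d.x j) := by rw [h2]; exact d.edge_bx j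
      have p1 : d.a i < d.x j := by rw [h1]; exact d.hx1 j
      have p2 : d.x j < d.b i := by rw [h2]; exact d.hx2 j
      exact not_both_inside hxx (d.edge_ax i) ((d.edge_bx i)) e1 e2
        (d.hx1 i) (d.hx2 i) p1 p2
  · have h3 := d.hab i
    rw [h1, h2] at h3
    exact absurd h3 (asymm (d.hab j))

lemma side_ne_D {i j : Fin k} (hij : i ≠ j) {p q w : Fin N} {t : Finset (Fin N)}
    (ht : IsTriangle C.T t) (hpt : p ∈ t) (hqt : q ∈ t) (hwt : w ∈ t)
    (hpq : p ≠ q) (hwp : w ≠ p) (hwq : w ≠ q) (hsub : t ⊆ d.quad i) :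
    ({p, q} : Finset (Fin N)) ≠ {d.a j, d.b j} := by
  intro hE
  have hteq : t = ({p, q, w} : Finset (Fin N)) := by
    refine (Finset.eq_of_subset_of_card_le ?_ ?_).symm
    · intro z hz
      simp only [Finset.mem_insert, Finset.mem_singleton] at hz
      rcases hz with rfl | rfl | rfl <;> assumption
    · rw [triangle_card ht,
        Finset.card_insert_of_notMem (by simp [hpq, Ne.symm hwp]),
        Finset.card_insert_of_notMem (by simp [Ne.symm hwq]), Finset.card_singleton]
  have hmem : d.a j ∈ t ∧ d.b j ∈ t ∧ w ≠ d.a j ∧ w ≠ d.b j := by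
    rcases pair_eq_iff hpq hE with ⟨hp, hq⟩ | ⟨hp, hq⟩
    · exact ⟨hp ▸ hpt, hq ▸ hqt, hp ▸ hwp, hq ▸ hwq⟩
    · exact ⟨hq ▸ hqt, hp ▸ hpt, hq ▸ hwq, hp ▸ hwp⟩
  obtain ⟨hat, hbt, hwa, hwb⟩ := hmem
  have hpj : p = d.a j ∨ p = d.b j := by
    have : p ∈ ({d.a j, d.b j} : Finset (Fin N)) := by rw [← hE]; simp
    simpa using this
  have hqj : q = d.a j ∨ q = d.b j := by
    have : q ∈ ({d.a j, d.b j} : Finset (Fin N)) := by rw [← hE]; simp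
    simpa using this
  have habs : ∀ w', w' = d.x j ∨ w' = d.y j → w = w' → False := by
    rintro w' hw' rfl
    apply d.subset_quad_absurd hij (t := t) (by rw [triangle_card ht]) hsub
    intro z hz
    have hzp : z = p ∨ z = q ∨ z = w := by rw [hteq] at hz; simpa using hz
    simp only [quad, Finset.mem_insert, Finset.mem_singleton]
    rcases hzp with rfl | rfl | rfl
    · tauto
    · tauto
    · tauto
  by_cases hwx : w = d.x j
  · exact habs _ (Or.inl rfl) hwx
  by_cases hwy : w = d.y j
  · exact habs _ (Or.inr rfl) hwy
  have ew_a : IsEdge C.T (d.a j) w := triangle_edge ht hat hwt (Ne.symm hwa)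
  have ew_b : IsEdge C.T (d.b j) w := triangle_edge ht hbt hwt (Ne.symm hwb)
  rcases lt_trichotomy w (d.a j) with hlt | heq | hgt
  · exact not_both_outside (d.hab j) hwy ew_a ew_b (d.edge_ay j) (d.edge_by j)
      (Or.inl hlt) (d.hy j)
  · exact hwa heq
  · rcases lt_trichotomy w (d.b j) with hlt2 | heq2 | hgt2
    · exact not_both_inside hwx ew_a ew_b (d.edge_ax j) (d.edge_bx j)
        hgt hlt2 (d.hx1 j) (d.hx2 j)
    · exact hwb heq2
    · exact not_both_outside (d.hab j) hwy ew_a ew_b (d.edge_ay j) (d.edge_by j)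
        (Or.inr hgt2) (d.hy j)

lemma edge_cross_xy {i : Fin k} {p q : Fin N} (h : IsEdge C.T p q)
    (hc : Cross2 ({p, q} : Finset (Fin N)) {d.x i, d.y i}) :
    ({p, q} : Finset (Fin N)) = {d.a i, d.b i} :=
  d.exit_XY hc (no_cross2_edges h (d.edge_ax i)) (no_cross2_edges h (d.edge_bx i).symm')
    (no_cross2_edges h (d.edge_ay i)) (no_cross2_edges h (d.edge_by i))

lemma xy_ne_xy {i j : Fin k} (hij : i ≠ j) :
    ({d.x i, d.y i} : Finset (Fin N)) ≠ {d.x j, d.y j} := by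
  intro h
  have hc : Cross2 ({d.a i, d.b i} : Finset (Fin N)) {d.x j, d.y j} := by
    rw [← h]; exact cross2_comm.mp (d.cross2_xy_ab i)
  exact d.D_ne_D hij (d.edge_cross_xy (d.edge_ab i) hc)

lemma xy_ne_D (i j : Fin k) :
    ({d.x i, d.y i} : Finset (Fin N)) ≠ {d.a j, d.b j} := by
  intro h
  apply d.xy_not_diag i
  rw [h]; exact d.hD j

lemma xy_not_cross_xy (i j : Fin k) :
    ¬ Cross2 ({d.x i, d.y i} : Finset (Fin N)) {d.x j, d.y j} := by
  by_cases hij : i = j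
  · subst hij; rintro (h | h) <;> exact not_crosses_self _ h
  · intro hc
    have hji : j ≠ i := fun h => hij h.symm
    have hside : ∀ p q : Fin N, IsEdge C.T p q → ({p, q} : Finset (Fin N)) ≠ {d.a i, d.b i} →
        ¬ Cross2 ({d.x i, d.y i} : Finset (Fin N)) {p, q} := by
      intro p q hpq hne hcc
      exact hne (d.edge_cross_xy hpq (cross2_comm.mp hcc))
    have s1 := hside _ _ (d.edge_ax j)
      (d.side_ne_D hji (d.h1 j) (by simp) (by simp) (by simp) (d.hax j)
        (d.hab j).ne' (Ne.symm (d.hxb j)) (d.tri_sub_quad1 j))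
    have s2 := hside _ _ ((d.edge_bx j).symm')
      (d.side_ne_D hji (d.h1 j) (by simp) (by simp) (by simp) (d.hxb j)
        (d.hax j) (d.hab j).ne (d.tri_sub_quad1 j))
    have s3 := hside _ _ (d.edge_ay j)
      (d.side_ne_D hji (d.h2 j) (by simp) (by simp) (by simp) (d.hay j)
        (d.hab j).ne' (d.hby j) (d.tri_sub_quad2 j))
    have s4 := hside _ _ (d.edge_by j)
      (d.side_ne_D hji (d.h2 j) (by simp) (by simp) (by simp) (d.hby j)
        (d.hab j).ne (d.hay j) (d.tri_sub_quad2 j))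
    exact d.xy_ne_D i j (d.exit_XY (i := j) hc s1 s2 s3 s4)

/-- The diagonal set after flipping the set of quadrilaterals indicated by `u`. -/
noncomputable def flipSet (u : Fin k → Bool) : Finset (Finset (Fin N)) :=
  (C.T.diags.filter (fun e => ∀ i, u i = true → e ≠ {d.a i, d.b i})) ∪
    ((Finset.univ.filter (fun i => u i = true)).image
      (fun i => ({d.x i, d.y i} : Finset (Fin N))))

lemma mem_flipSet {u : Fin k → Bool} {e : Finset (Fin N)} :
    e ∈ d.flipSet u ↔
      (e ∈ C.T.diags ∧ ∀ i, u i = true → e ≠ {d.a i, d.b i}) ∨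
        ∃ i, u i = true ∧ e = {d.x i, d.y i} := by
  simp only [flipSet, Finset.mem_union, Finset.mem_filter, Finset.mem_image,
    Finset.mem_univ, true_and]
  constructor
  · rintro (h | ⟨i, hi, hE⟩)
    · exact Or.inl h
    · exact Or.inr ⟨i, hi, hE.symm⟩
  · rintro (h | ⟨i, hi, hE⟩)
    · exact Or.inl h
    · exact Or.inr ⟨i, hi, hE.symm⟩

lemma D_mem_flipSet {u : Fin k → Bool} {i : Fin k} :
    ({d.a i, d.b i} : Finset (Fin N)) ∈ d.flipSet u ↔ u i = false := by
  rw [d.mem_flipSet]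
  constructor
  · rintro (⟨-, h⟩ | ⟨j, hj, hE⟩)
    · by_contra hne
      exact h i (by simpa using hne) rfl
    · exact absurd hE.symm (d.xy_ne_D j i)
  · intro hui
    left
    refine ⟨d.hD i, fun j hj hE => ?_⟩
    have hij : i ≠ j := by rintro rfl; rw [hui] at hj; exact Bool.false_ne_true hj
    exact d.D_ne_D hij hE
lemma XY_mem_flipSet {u : Fin k → Bool} {i : Fin k} :
    ({d.x i, d.y i} : Finset (Fin N)) ∈ d.flipSet u ↔ u i = true := by
  rw [d.mem_flipSet]
  constructor
  · rintro (⟨h, -⟩ | ⟨j, hj, hE⟩)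
    · exact absurd h (d.xy_not_diag i)
    · rcases eq_or_ne i j with rfl | hij
      · exact hj
      · exact absurd hE (d.xy_ne_xy hij)
  · intro hui
    exact Or.inr ⟨i, hui, rfl⟩

lemma flip_noncross2 {u : Fin k → Bool} {e1 e2 : Finset (Fin N)}
    (h1 : e1 ∈ d.flipSet u) (h2 : e2 ∈ d.flipSet u) : ¬ Cross2 e1 e2 := by
  rw [d.mem_flipSet] at h1 h2
  rcases h1 with ⟨h1m, h1n⟩ | ⟨i, hi, rfl⟩ <;> rcases h2 with ⟨h2m, h2n⟩ | ⟨j, hj, rfl⟩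
  · rintro (h | h)
    · exact C.T.noncross _ h1m _ h2m h
    · exact C.T.noncross _ h2m _ h1m h
  · obtain ⟨p, q, hpq, -, rfl⟩ := C.T.isDiag _ h1m
    intro hc
    exact h1n j hj (d.edge_cross_xy ⟨hpq, Or.inr h1m⟩ hc)
  · obtain ⟨p, q, hpq, -, rfl⟩ := C.T.isDiag _ h2m
    intro hc
    exact h2n i hi (d.edge_cross_xy ⟨hpq, Or.inr h2m⟩ (cross2_comm.mp hc))
  · exact d.xy_not_cross_xy i j

lemma side_in_flipSet (u : Fin k → Bool) {i : Fin k} {p q w : Fin N} {t : Finset (Fin N)}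
    (ht : IsTriangle C.T t) (hpt : p ∈ t) (hqt : q ∈ t) (hwt : w ∈ t)
    (hpq : p ≠ q) (hwp : w ≠ p) (hwq : w ≠ q) (hsub : t ⊆ d.quad i)
    (hDi : ({p, q} : Finset (Fin N)) ≠ {d.a i, d.b i}) :
    BdryAdj N p q ∨ ({p, q} : Finset (Fin N)) ∈ d.flipSet u := by
  rcases (triangle_edge ht hpt hqt hpq).2 with hb | hm
  · exact Or.inl hb
  · right
    rw [d.mem_flipSet]
    left
    refine ⟨hm, fun j hj hE => ?_⟩
    rcases eq_or_ne i j with rfl | hij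
    · exact hDi hE
    · exact d.side_ne_D hij ht hpt hqt hwt hpq hwp hwq hsub hE

lemma side_not_crossed (u : Fin k → Bool) {e : Finset (Fin N)}
    (hnc : ∀ e' ∈ d.flipSet u, ¬ Crosses e e' ∧ ¬ Crosses e' e)
    {i : Fin k} {p q w : Fin N} {t : Finset (Fin N)}
    (ht : IsTriangle C.T t) (hpt : p ∈ t) (hqt : q ∈ t) (hwt : w ∈ t)
    (hpq : p ≠ q) (hwp : w ≠ p) (hwq : w ≠ q) (hsub : t ⊆ d.quad i)
    (hDi : ({p, q} : Finset (Fin N)) ≠ {d.a i, d.b i}) :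
    ¬ Cross2 e ({p, q} : Finset (Fin N)) := by
  rcases d.side_in_flipSet u ht hpt hqt hwt hpq hwp hwq hsub hDi with hb | hm
  · intro hc
    exact not_cross2_of_bdry hb e (cross2_comm.mp hc)
  · rintro (hc | hc)
    · exact (hnc _ hm).1 hc
    · exact (hnc _ hm).2 hc

lemma side_ax_ne_D (i : Fin k) : ({d.a i, d.x i} : Finset (Fin N)) ≠ {d.a i, d.b i} := by
  intro h
  rcases pair_eq_iff (d.hax i) h with ⟨-, h2⟩ | ⟨h1, -⟩
  · exact (d.hxb i) h2
  · exact (d.hab i).ne h1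
lemma side_xb_ne_D (i : Fin k) : ({d.x i, d.b i} : Finset (Fin N)) ≠ {d.a i, d.b i} := by
  intro h
  rcases pair_eq_iff (d.hxb i) h with ⟨h1, -⟩ | ⟨-, h2⟩
  · exact (d.hax i) h1.symm
  · exact (d.hab i).ne h2.symm
lemma side_ay_ne_D (i : Fin k) : ({d.a i, d.y i} : Finset (Fin N)) ≠ {d.a i, d.b i} := by
  intro h
  rcases pair_eq_iff (d.hay i) h with ⟨-, h2⟩ | ⟨h1, -⟩
  · exact (d.hby i) h2.symm
  · exact (d.hab i).ne h1
lemma side_by_ne_D (i : Fin k) : ({d.b i, d.y i} : Finset (Fin N)) ≠ {d.a i, d.b i} := by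
  intro h
  rcases pair_eq_iff (d.hby i) h with ⟨h1, -⟩ | ⟨-, h2⟩
  · exact (d.hab i).ne h1.symm
  · exact (d.hay i) h2.symm

/-- The triangulation obtained by flipping the quadrilaterals indicated by `u`. -/
noncomputable def flipT (u : Fin k → Bool) : Triangulation N where
  diags := d.flipSet u
  isDiag := by
    intro e he
    rw [d.mem_flipSet] at he
    rcases he with ⟨h, -⟩ | ⟨i, -, rfl⟩
    · exact C.T.isDiag _ h
    · exact d.xy_isDiag i
  noncross := fun e1 h1 e2 h2 hc => d.flip_noncross2 h1 h2 (Or.inl hc)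
  maximal := by
    intro e hdiag hnc
    by_cases heD : e ∈ C.T.diags
    · rw [d.mem_flipSet]
      left
      refine ⟨heD, fun i hi hE => ?_⟩
      subst hE
      have hXYm : ({d.x i, d.y i} : Finset (Fin N)) ∈ d.flipSet u :=
        d.XY_mem_flipSet.mpr hi
      rcases cross2_comm.mp (d.cross2_xy_ab i) with h | h
      · exact (hnc _ hXYm).1 h
      · exact (hnc _ hXYm).2 h
    · obtain ⟨d₀, hd₀, hcross⟩ : ∃ d₀ ∈ C.T.diags, Cross2 e d₀ := by
        by_contra h
        push_neg at h
        exact heD (C.T.maximal e hdiag (fun e' he' =>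
          ⟨fun hc => h e' he' (Or.inl hc), fun hc => h e' he' (Or.inr hc)⟩))
      have hd₀n : d₀ ∉ d.flipSet u := by
        intro hmem
        rcases hcross with h | h
        · exact (hnc _ hmem).1 h
        · exact (hnc _ hmem).2 h
      obtain ⟨i, hi, rfl⟩ : ∃ i, u i = true ∧ d₀ = {d.a i, d.b i} := by
        by_contra h
        push_neg at h
        exact hd₀n (d.mem_flipSet.mpr (Or.inl ⟨hd₀, fun i hi => h i hi⟩))
      have s1 := d.side_not_crossed u hnc (d.h1 i) (by simp) (by simp) (by simp)
        (d.hax i) (d.hab i).ne' (Ne.symm (d.hxb i)) (d.tri_sub_quad1 i) (d.side_ax_ne_D i)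
      have s2 := d.side_not_crossed u hnc (d.h1 i) (by simp) (by simp) (by simp)
        (d.hxb i) (d.hax i) (d.hab i).ne (d.tri_sub_quad1 i) (d.side_xb_ne_D i)
      have s3 := d.side_not_crossed u hnc (d.h2 i) (by simp) (by simp) (by simp)
        (d.hay i) (d.hab i).ne' (d.hby i) (d.tri_sub_quad2 i) (d.side_ay_ne_D i)
      have s4 := d.side_not_crossed u hnc (d.h2 i) (by simp) (by simp) (by simp)
        (d.hby i) (d.hab i).ne (d.hay i) (d.tri_sub_quad2 i) (d.side_by_ne_D i)
      have he : e = ({d.x i, d.y i} : Finset (Fin N)) := d.exit_D hcross s1 s2 s3 s4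
      rw [d.mem_flipSet]
      exact Or.inr ⟨i, hi, he⟩

lemma side_edge_flip (u : Fin k → Bool) {i : Fin k} {p q w : Fin N} {t : Finset (Fin N)}
    (ht : IsTriangle C.T t) (hpt : p ∈ t) (hqt : q ∈ t) (hwt : w ∈ t)
    (hpq : p ≠ q) (hwp : w ≠ p) (hwq : w ≠ q) (hsub : t ⊆ d.quad i)
    (hDi : ({p, q} : Finset (Fin N)) ≠ {d.a i, d.b i}) :
    IsEdge (d.flipT u) p q := by
  rcases d.side_in_flipSet u ht hpt hqt hwt hpq hwp hwq hsub hDi with hb | hm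
  · exact ⟨hpq, Or.inl hb⟩
  · exact ⟨hpq, Or.inr hm⟩

lemma edge_ax_flip (u : Fin k → Bool) (i : Fin k) : IsEdge (d.flipT u) (d.a i) (d.x i) :=
  d.side_edge_flip u (d.h1 i) (by simp) (by simp) (by simp)
    (d.hax i) (d.hab i).ne' (Ne.symm (d.hxb i)) (d.tri_sub_quad1 i) (d.side_ax_ne_D i)

lemma edge_xb_flip (u : Fin k → Bool) (i : Fin k) : IsEdge (d.flipT u) (d.x i) (d.b i) :=
  d.side_edge_flip u (d.h1 i) (by simp) (by simp) (by simp)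
    (d.hxb i) (d.hax i) (d.hab i).ne (d.tri_sub_quad1 i) (d.side_xb_ne_D i)

lemma edge_ay_flip (u : Fin k → Bool) (i : Fin k) : IsEdge (d.flipT u) (d.a i) (d.y i) :=
  d.side_edge_flip u (d.h2 i) (by simp) (by simp) (by simp)
    (d.hay i) (d.hab i).ne' (d.hby i) (d.tri_sub_quad2 i) (d.side_ay_ne_D i)

lemma edge_by_flip (u : Fin k → Bool) (i : Fin k) : IsEdge (d.flipT u) (d.b i) (d.y i) :=
  d.side_edge_flip u (d.h2 i) (by simp) (by simp) (by simp)
    (d.hby i) (d.hab i).ne (d.hay i) (d.tri_sub_quad2 i) (d.side_by_ne_D i)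

lemma tri_abx_flip {u : Fin k → Bool} {i : Fin k} (hui : u i = false) :
    IsTriangle (d.flipT u) {d.a i, d.b i, d.x i} :=
  ⟨d.a i, d.b i, d.x i, (d.hab i).ne, d.hax i, Ne.symm (d.hxb i), rfl,
    ⟨(d.hab i).ne, Or.inr (d.D_mem_flipSet.mpr hui)⟩,
    d.edge_ax_flip u i, (d.edge_xb_flip u i).symm'⟩

lemma tri_aby_flip {u : Fin k → Bool} {i : Fin k} (hui : u i = false) :
    IsTriangle (d.flipT u) {d.a i, d.b i, d.y i} :=
  ⟨d.a i, d.b i, d.y i, (d.hab i).ne, d.hay i, d.hby i, rfl,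
    ⟨(d.hab i).ne, Or.inr (d.D_mem_flipSet.mpr hui)⟩,
    d.edge_ay_flip u i, d.edge_by_flip u i⟩

lemma tri_axy_flip {u : Fin k → Bool} {i : Fin k} (hui : u i = true) :
    IsTriangle (d.flipT u) {d.a i, d.x i, d.y i} :=
  ⟨d.a i, d.x i, d.y i, d.hax i, d.hay i, d.hxy i, rfl,
    d.edge_ax_flip u i, d.edge_ay_flip u i,
    ⟨d.hxy i, Or.inr (d.XY_mem_flipSet.mpr hui)⟩⟩

lemma tri_bxy_flip {u : Fin k → Bool} {i : Fin k} (hui : u i = true) :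
    IsTriangle (d.flipT u) {d.b i, d.x i, d.y i} :=
  ⟨d.b i, d.x i, d.y i, Ne.symm (d.hxb i), d.hby i, d.hxy i, rfl,
    (d.edge_xb_flip u i).symm', d.edge_by_flip u i,
    ⟨d.hxy i, Or.inr (d.XY_mem_flipSet.mpr hui)⟩⟩

/-- New triangles created by the flip at `i`. -/
def IsNew (t : Finset (Fin N)) (i : Fin k) : Prop :=
  t = {d.a i, d.x i, d.y i} ∨ t = {d.b i, d.x i, d.y i}

lemma new_sub_quad {t : Finset (Fin N)} {i : Fin k} (h : d.IsNew t i) : t ⊆ d.quad i := by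
  rcases h with rfl | rfl <;>
    · intro z hz
      simp only [Finset.mem_insert, Finset.mem_singleton] at hz
      simp only [quad, Finset.mem_insert, Finset.mem_singleton]
      tauto

lemma new_card {t : Finset (Fin N)} {i : Fin k} (h : d.IsNew t i) : t.card = 3 := by
  rcases h with rfl | rfl
  · rw [Finset.card_insert_of_notMem (by simp [d.hax i, d.hay i]),
      Finset.card_insert_of_notMem (by simp [d.hxy i]), Finset.card_singleton]
  · rw [Finset.card_insert_of_notMem (by simp [Ne.symm (d.hxb i), d.hby i]),
      Finset.card_insert_of_notMem (by simp [d.hxy i]), Finset.card_singleton]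

lemma new_unique {t : Finset (Fin N)} {i j : Fin k} (hi : d.IsNew t i) (hj : d.IsNew t j) :
    i = j := by
  by_contra hij
  exact d.subset_quad_absurd hij (by rw [d.new_card hi]) (d.new_sub_quad hi) (d.new_sub_quad hj)

lemma old_not_new (i j : Fin k) : ¬ d.IsNew ({d.a i, d.b i, d.x i} : Finset (Fin N)) j := by
  intro h
  rcases eq_or_ne i j with rfl | hij
  · have hbm : d.b i ∈ ({d.a i, d.b i, d.x i} : Finset (Fin N)) := by simp
    rcases h with hE | hE <;> rw [hE] at hbm <;>
      simp only [Finset.mem_insert, Finset.mem_singleton] at hbm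
    · rcases hbm with h' | h' | h'
      · exact (d.hab i).ne h'.symm
      · exact (d.hxb i) h'.symm
      · exact (d.hby i) h'
    · have ham : d.a i ∈ ({d.b i, d.x i, d.y i} : Finset (Fin N)) := by
        rw [← hE]; simp
      simp only [Finset.mem_insert, Finset.mem_singleton] at ham
      rcases ham with h' | h' | h'
      · exact (d.hab i).ne h'
      · exact (d.hax i) h'
      · exact (d.hay i) h'
  · refine d.subset_quad_absurd hij (t := {d.a i, d.b i, d.x i})
      (by rw [d.tri_abx_card i]) (d.tri_sub_quad1 i) (d.new_sub_quad h)

lemma old2_not_new (i j : Fin k) : ¬ d.IsNew ({d.a i, d.b i, d.y i} : Finset (Fin N)) j := by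
  intro h
  rcases eq_or_ne i j with rfl | hij
  · have hbm : d.b i ∈ ({d.a i, d.b i, d.y i} : Finset (Fin N)) := by simp
    have ham : d.a i ∈ ({d.a i, d.b i, d.y i} : Finset (Fin N)) := by simp
    rcases h with hE | hE
    · rw [hE] at hbm
      simp only [Finset.mem_insert, Finset.mem_singleton] at hbm
      rcases hbm with h' | h' | h'
      · exact (d.hab i).ne h'.symm
      · exact (d.hxb i) h'.symm
      · exact (d.hby i) h'
    · rw [hE] at ham
      simp only [Finset.mem_insert, Finset.mem_singleton] at ham
      rcases ham with h' | h' | h'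
      · exact (d.hab i).ne h'
      · exact (d.hax i) h'
      · exact (d.hay i) h'
  · refine d.subset_quad_absurd hij (t := {d.a i, d.b i, d.y i})
      (by rw [triangle_card (d.h2 i)]) (d.tri_sub_quad2 i) (d.new_sub_quad h)

open Classical in
/-- The colour assignment after flipping according to `u`. -/
noncomputable def flipCol (u : Fin k → Bool) (t : Finset (Fin N)) : Fin 2 :=
  if h : ∃ i, u i = true ∧ d.IsNew t i then
    finRotate 2 (C.col ⟨{d.a h.choose, d.b h.choose, d.x h.choose}, d.h1 h.choose⟩)
  else if h2 : IsTriangle C.T t then C.col ⟨t, h2⟩ else 0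

/-- The flipped coloured triangulation. -/
noncomputable def flip (u : Fin k → Bool) : ColouredTri N 2 :=
  ⟨d.flipT u, fun t => d.flipCol u t.val⟩

lemma flipCol_new {u : Fin k → Bool} {t : Finset (Fin N)} {i : Fin k}
    (hui : u i = true) (hnew : d.IsNew t i) :
    d.flipCol u t = finRotate 2 (C.col ⟨{d.a i, d.b i, d.x i}, d.h1 i⟩) := by
  have h : ∃ j, u j = true ∧ d.IsNew t j := ⟨i, hui, hnew⟩
  rw [flipCol, dif_pos h]
  have : h.choose = i := d.new_unique h.choose_spec.2 hnew
  exact congrArg (fun j => finRotate 2 (C.col ⟨{d.a j, d.b j, d.x j}, d.h1 j⟩)) this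

lemma flipCol_old {u : Fin k → Bool} {t : Finset (Fin N)}
    (hnn : ∀ i, u i = true → ¬ d.IsNew t i) (h2 : IsTriangle C.T t) :
    d.flipCol u t = C.col ⟨t, h2⟩ := by
  rw [flipCol, dif_neg (by rintro ⟨i, hi, hn⟩; exact hnn i hi hn), dif_pos h2]

lemma update_eq_true {u : Fin k → Bool} {i j : Fin k} :
    Function.update u i true j = true ↔ (j = i ∨ u j = true) := by
  rw [Function.update_apply]
  by_cases h : j = i <;> simp [h]

lemma flipSet_update {u : Fin k → Bool} {i : Fin k} (hui : u i = false) :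
    d.flipSet (Function.update u i true) =
      insert ({d.x i, d.y i} : Finset (Fin N))
        ((d.flipSet u).erase {d.a i, d.b i}) := by
  ext e
  rw [Finset.mem_insert, Finset.mem_erase, d.mem_flipSet, d.mem_flipSet]
  constructor
  · rintro (⟨hm, hn⟩ | ⟨j, hj, rfl⟩)
    · right
      refine ⟨hn i (update_eq_true.mpr (Or.inl rfl)), Or.inl ⟨hm, fun j hj => ?_⟩⟩
      exact hn j (update_eq_true.mpr (Or.inr hj))
    · rcases update_eq_true.mp hj with rfl | hj'
      · exact Or.inl rfl
      · refine Or.inr ⟨d.xy_ne_D j i, Or.inr ⟨j, hj', rfl⟩⟩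
  · rintro (rfl | ⟨hne, (⟨hm, hn⟩ | ⟨j, hj, rfl⟩)⟩)
    · exact Or.inr ⟨i, update_eq_true.mpr (Or.inl rfl), rfl⟩
    · left
      refine ⟨hm, fun j hj => ?_⟩
      rcases update_eq_true.mp hj with rfl | hj'
      · exact hne
      · exact hn j hj'
    · exact Or.inr ⟨j, update_eq_true.mpr (Or.inr hj), rfl⟩

lemma new_not_tri {u : Fin k → Bool} {i : Fin k} (hui : u i = false)
    {t : Finset (Fin N)} (hn : d.IsNew t i) : ¬ IsTriangle (d.flipT u) t := by
  intro ht
  have hx : d.x i ∈ t := by rcases hn with rfl | rfl <;> simp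
  have hy : d.y i ∈ t := by rcases hn with rfl | rfl <;> simp
  have he := triangle_edge ht hx hy (d.hxy i)
  rcases he.2 with hb | hm
  · exact d.xy_not_bdry i hb
  · have := d.XY_mem_flipSet.mp hm
    rw [hui] at this
    exact Bool.false_ne_true this

lemma flip2at {u : Fin k → Bool} {i : Fin k} (hui : u i = false) :
    Flip2At ({d.a i, d.b i} : Finset (Fin N)) (d.flip u)
      (d.flip (Function.update u i true)) := by
  have hui' : Function.update u i true i = true := update_eq_true.mpr (Or.inl rfl)
  refine ⟨d.a i, d.b i, d.x i, d.y i, d.tri_abx_flip hui, d.tri_aby_flip hui,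
    d.tri_axy_flip hui', d.tri_bxy_flip hui', rfl, d.D_mem_flipSet.mpr hui, d.hxy i,
    ?_, d.flipSet_update hui, ?_, ?_, ?_⟩
  · show d.flipCol u _ = d.flipCol u _
    rw [d.flipCol_old (fun j hj hn => d.old_not_new i j hn) (d.h1 i),
      d.flipCol_old (fun j hj hn => d.old2_not_new i j hn) (d.h2 i)]
    exact d.hcol i
  · show d.flipCol _ _ = finRotate 2 (d.flipCol u _)
    rw [d.flipCol_new hui' (Or.inl rfl),
      d.flipCol_old (fun j hj hn => d.old_not_new i j hn) (d.h1 i)]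
  · show d.flipCol _ _ = finRotate 2 (d.flipCol u _)
    rw [d.flipCol_new hui' (Or.inr rfl),
      d.flipCol_old (fun j hj hn => d.old_not_new i j hn) (d.h1 i)]
  · intro t ht ht' hne1 hne2
    show d.flipCol _ _ = d.flipCol u _
    by_cases hnew : ∃ j, u j = true ∧ d.IsNew t j
    · obtain ⟨j, hj, hn⟩ := hnew
      rw [d.flipCol_new hj hn, d.flipCol_new (update_eq_true.mpr (Or.inr hj)) hn]
    · have hnew' : ¬ ∃ j, Function.update u i true j = true ∧ d.IsNew t j := by
        rintro ⟨j, hj, hn⟩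
        rcases update_eq_true.mp hj with rfl | hj'
        · exact d.new_not_tri hui hn ht
        · exact hnew ⟨j, hj', hn⟩
      rw [flipCol, flipCol, dif_neg hnew', dif_neg hnew]

lemma flip_injective : Function.Injective d.flip := by
  intro u v h
  have hds : d.flipSet u = d.flipSet v := congrArg (fun c => c.T.diags) h
  funext j
  have hj : ({d.x j, d.y j} : Finset (Fin N)) ∈ d.flipSet u ↔
      ({d.x j, d.y j} : Finset (Fin N)) ∈ d.flipSet v := by rw [hds]
  rw [d.XY_mem_flipSet, d.XY_mem_flipSet] at hj
  cases hu : u j <;> cases hv : v j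
  · rfl
  · rw [hu, hv] at hj; exact absurd (hj.mpr rfl) Bool.false_ne_true
  · rw [hu, hv] at hj; exact absurd (hj.mp rfl) Bool.false_ne_true
  · rfl

lemma flip_adj {u v : Fin k → Bool} (h : cubeAdj k u v) :
    (flipGraph N).Adj (d.flip u) (d.flip v) := by
  obtain ⟨i, hi, huniq⟩ := h
  have hrest : ∀ j, j ≠ i → u j = v j := by
    intro j hj
    by_contra h'
    exact hj (huniq j h')
  have hne : d.flip u ≠ d.flip v := by
    intro h'
    exact hi (congrFun (d.flip_injective h') i)
  cases hu : u i <;> cases hv : v i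
  · rw [hu, hv] at hi; exact absurd rfl hi
  · have hveq : v = Function.update u i true := by
      funext j
      rcases eq_or_ne j i with rfl | hj
      · rw [Function.update_self, hv]
      · rw [Function.update_of_ne hj, hrest j hj]
    refine ⟨hne, Or.inl ⟨{d.a i, d.b i}, ?_⟩⟩
    rw [hveq]
    exact d.flip2at hu
  · have hueq : u = Function.update v i true := by
      funext j
      rcases eq_or_ne j i with rfl | hj
      · rw [Function.update_self, hu]
      · rw [Function.update_of_ne hj, hrest j hj]
    refine ⟨hne, Or.inr ⟨{d.a i, d.b i}, ?_⟩⟩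
    rw [hueq]
    exact d.flip2at hv
  · rw [hu, hv] at hi; exact absurd rfl hi

lemma triangulation_ext {T1 T2 : Triangulation N} (h : T1.diags = T2.diags) : T1 = T2 := by
  cases T1; cases T2
  dsimp at h
  subst h
  rfl

lemma colouredTri_ext {m : ℕ} {C1 C2 : ColouredTri N m} (hT : C1.T = C2.T)
    (hc : ∀ t (g1 : IsTriangle C1.T t) (g2 : IsTriangle C2.T t),
      C1.col ⟨t, g1⟩ = C2.col ⟨t, g2⟩) : C1 = C2 := by
  obtain ⟨T1, c1⟩ := C1
  obtain ⟨T2, c2⟩ := C2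
  dsimp at hT
  subst hT
  have : c1 = c2 := by
    funext t
    obtain ⟨s, hs⟩ := t
    exact hc s hs hs
  rw [this]

lemma flip_bot : d.flip (fun _ => false) = C := by
  have hds : d.flipSet (fun _ => false) = C.T.diags := by
    rw [flipSet]
    have h1 : (Finset.univ.filter (fun i : Fin k => (fun _ => false) i = true)) = ∅ := by
      simp
    rw [h1, Finset.image_empty, Finset.union_empty]
    apply Finset.filter_true_of_mem
    intro e he i hi
    exact absurd hi (by simp)
  apply colouredTri_ext (triangulation_ext hds)
  intro t g1 g2
  exact d.flipCol_old (fun i hi => absurd hi (by simp)) g2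

lemma flip_reach (u : Fin k → Bool) : (flipGraph N).Reachable C (d.flip u) := by
  suffices h : ∀ n (u : Fin k → Bool),
      (Finset.univ.filter (fun i => u i = true)).card = n →
      (flipGraph N).Reachable C (d.flip u) from h _ u rfl
  intro n
  induction n with
  | zero =>
    intro u hcard
    have hu : u = fun _ => false := by
      funext j
      rw [Finset.card_eq_zero] at hcard
      by_contra h'
      have hjt : u j = true := by
        cases hju : u j
        · exact absurd hju h'
        · rfl
      have : j ∈ Finset.univ.filter (fun i => u i = true) := by
        simp only [Finset.mem_filter, Finset.mem_univ, true_and]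
        exact hjt
      rw [hcard] at this
      exact absurd this (Finset.notMem_empty j)
    rw [hu, d.flip_bot]
  | succ n ih =>
    intro u hcard
    have hpos : 0 < (Finset.univ.filter (fun i => u i = true)).card := by omega
    obtain ⟨i, hi⟩ := Finset.card_pos.mp hpos
    have hi' : u i = true := (Finset.mem_filter.mp hi).2
    set u' := Function.update u i false with hu'def
    have hu'i : u' i = false := Function.update_self i false u
    have hupdate : Function.update u' i true = u := by
      funext j
      rcases eq_or_ne j i with rfl | hj
      · rw [Function.update_self, hi']
      · rw [Function.update_of_ne hj, hu'def, Function.update_of_ne hj]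
    have hcard' : (Finset.univ.filter (fun j => u' j = true)).card = n := by
      have hfe : Finset.univ.filter (fun j => u' j = true) =
          (Finset.univ.filter (fun j => u j = true)).erase i := by
        ext j
        simp only [Finset.mem_filter, Finset.mem_univ, true_and, Finset.mem_erase]
        rcases eq_or_ne j i with rfl | hj
        · simp [hu'i]
        · rw [hu'def, Function.update_of_ne hj]
          simp [hj]
      rw [hfe, Finset.card_erase_of_mem hi, hcard]
      omega
    have hadj : (flipGraph N).Adj (d.flip u') (d.flip u) := by
      have hne : d.flip u' ≠ d.flip u := by
        intro h'
        have := congrFun (d.flip_injective h') i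
        rw [hu'i, hi'] at this
        exact Bool.false_ne_true this
      refine ⟨hne, Or.inl ⟨{d.a i, d.b i}, ?_⟩⟩
      have := d.flip2at (u := u') (i := i) hu'i
      rwa [hupdate] at this
    exact (ih u' hcard').trans hadj.reachable

lemma cube_emb (dd : FD N k C) : ∃ f : (Fin k → Bool) → ColouredTri N 2, CubeEmb C k f :=
  ⟨dd.flip, dd.flip_injective, fun _ _ h => dd.flip_adj h, dd.flip_reach⟩

end FD

lemma extract_quad {C : ColouredTri N 2} {Dd tt1 tt2 : Finset (Fin N)}
    (g1 : IsTriangle C.T tt1) (g2 : IsTriangle C.T tt2)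
    (hDm : Dd ∈ C.T.diags) (hs1 : Dd ⊆ tt1) (hs2 : Dd ⊆ tt2) (hne : tt1 ≠ tt2)
    (hc : C.col ⟨tt1, g1⟩ = C.col ⟨tt2, g2⟩) :
    ∃ a b x y : Fin N, a < b ∧ a < x ∧ x < b ∧ (y < a ∨ b < y) ∧
      ({a, b} : Finset (Fin N)) ∈ C.T.diags ∧
      (∃ (k1 : IsTriangle C.T {a, b, x}) (k2 : IsTriangle C.T {a, b, y}),
        C.col ⟨{a, b, x}, k1⟩ = C.col ⟨{a, b, y}, k2⟩) ∧
      tt1 ∪ tt2 = {a, b, x, y} := by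
  obtain ⟨p, q, hpq, hbd, hDeq⟩ := C.T.isDiag Dd hDm
  obtain ⟨A, B, hAB, hDeq'⟩ : ∃ A B : Fin N, A < B ∧ Dd = {A, B} := by
    rcases lt_trichotomy p q with h | h | h
    · exact ⟨p, q, h, hDeq⟩
    · exact absurd h hpq
    · exact ⟨q, p, h, by rw [hDeq, Finset.pair_comm]⟩
  have hDcard : Dd.card = 2 := by
    rw [hDeq', Finset.card_insert_of_notMem (by simp [hAB.ne]), Finset.card_singleton]
  have key : ∀ t : Finset (Fin N), IsTriangle C.T t → Dd ⊆ t →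
      ∃ u, u ∉ Dd ∧ t = insert u Dd := by
    intro t ht hsub
    have hc3 : t.card = 3 := triangle_card ht
    have hsd : (t \ Dd).card = 1 := by rw [Finset.card_sdiff_of_subset hsub, hc3, hDcard]
    obtain ⟨u, hu⟩ := Finset.card_eq_one.mp hsd
    have humem : u ∈ t \ Dd := hu ▸ Finset.mem_singleton_self u
    refine ⟨u, (Finset.mem_sdiff.mp humem).2, ?_⟩
    have hun := Finset.sdiff_union_of_subset hsub
    rw [hu, ← Finset.insert_eq] at hun
    exact hun.symm
  obtain ⟨u, huD, e1⟩ := key tt1 g1 hs1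
  obtain ⟨v, hvD, e2⟩ := key tt2 g2 hs2
  have huv : u ≠ v := by
    rintro rfl
    exact hne (e1.trans e2.symm)
  have hAD : A ∈ Dd := by rw [hDeq']; simp
  have hBD : B ∈ Dd := by rw [hDeq']; simp
  have huA : u ≠ A := fun h => huD (h ▸ hAD)
  have huB : u ≠ B := fun h => huD (h ▸ hBD)
  have hvA : v ≠ A := fun h => hvD (h ▸ hAD)
  have hvB : v ≠ B := fun h => hvD (h ▸ hBD)
  have hA1 : A ∈ tt1 := hs1 hAD
  have hB1 : B ∈ tt1 := hs1 hBD
  have hu1 : u ∈ tt1 := by rw [e1]; exact Finset.mem_insert_self u Dd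
  have hA2 : A ∈ tt2 := hs2 hAD
  have hB2 : B ∈ tt2 := hs2 hBD
  have hv2 : v ∈ tt2 := by rw [e2]; exact Finset.mem_insert_self v Dd
  have hau : IsEdge C.T A u := triangle_edge g1 hA1 hu1 (Ne.symm huA)
  have hbu : IsEdge C.T B u := triangle_edge g1 hB1 hu1 (Ne.symm huB)
  have hav : IsEdge C.T A v := triangle_edge g2 hA2 hv2 (Ne.symm hvA)
  have hbv : IsEdge C.T B v := triangle_edge g2 hB2 hv2 (Ne.symm hvB)
  have e1' : tt1 = ({A, B, u} : Finset (Fin N)) := by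
    rw [e1, hDeq']
    ext z
    simp only [Finset.mem_insert, Finset.mem_singleton]
    tauto
  have e2' : tt2 = ({A, B, v} : Finset (Fin N)) := by
    rw [e2, hDeq']
    ext z
    simp only [Finset.mem_insert, Finset.mem_singleton]
    tauto
  have k1 : IsTriangle C.T {A, B, u} := by rw [← e1']; exact g1
  have k2 : IsTriangle C.T {A, B, v} := by rw [← e2']; exact g2
  have hsub1 : (⟨tt1, g1⟩ : {t : Finset (Fin N) // IsTriangle C.T t}) = ⟨{A, B, u}, k1⟩ :=
    Subtype.ext e1'
  have hsub2 : (⟨tt2, g2⟩ : {t : Finset (Fin N) // IsTriangle C.T t}) = ⟨{A, B, v}, k2⟩ :=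
    Subtype.ext e2'
  have hc' : C.col ⟨{A, B, u}, k1⟩ = C.col ⟨{A, B, v}, k2⟩ := by
    rw [← hsub1, ← hsub2]; exact hc
  have hmA : ({A, B} : Finset (Fin N)) ∈ C.T.diags := by rw [← hDeq']; exact hDm
  have hun1 : tt1 ∪ tt2 = ({A, B, u, v} : Finset (Fin N)) := by
    rw [e1', e2']
    ext z
    simp only [Finset.mem_union, Finset.mem_insert, Finset.mem_singleton]
    tauto
  have hun2 : tt1 ∪ tt2 = ({A, B, v, u} : Finset (Fin N)) := by
    rw [e1', e2']
    ext z
    simp only [Finset.mem_union, Finset.mem_insert, Finset.mem_singleton]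
    tauto
  rcases opp_side hAB huv huA huB hvA hvB hau hbu hav hbv with
    ⟨hi1, hi2, ho⟩ | ⟨hi1, hi2, ho⟩
  · exact ⟨A, B, u, v, hAB, hi1, hi2, ho, hmA, ⟨k1, k2, hc'⟩, hun1⟩
  · exact ⟨A, B, v, u, hAB, hi1, hi2, ho, hmA, ⟨k2, k1, hc'.symm⟩, hun2⟩

/-- If a 2-coloured triangulation has `k > 1` flippable diagonals whose
quadrilaterals are pairwise disjoint (sharing at most a diagonal), then its
connected component in the 2-coloured flip graph contains a `k`-dimensional
hypercube. -/
theorem hypercube_from_disjoint_flips {N : ℕ} (k : ℕ) (hk : 1 < k)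
    (C : ColouredTri N 2) (D t₁ t₂ : Fin k → Finset (Fin N))
    (ht₁ : ∀ i, IsTriangle C.T (t₁ i)) (ht₂ : ∀ i, IsTriangle C.T (t₂ i))
    (hD : ∀ i, D i ∈ C.T.diags ∧ D i ⊆ t₁ i ∧ D i ⊆ t₂ i ∧ t₁ i ≠ t₂ i)
    (hcol : ∀ i, C.col ⟨t₁ i, ht₁ i⟩ = C.col ⟨t₂ i, ht₂ i⟩)
    (hdisj : ∀ i j, i ≠ j → ((t₁ i ∪ t₂ i) ∩ (t₁ j ∪ t₂ j)).card ≤ 2) :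
    ∃ f : (Fin k → Bool) → ColouredTri N 2, CubeEmb C k f := by
  have H := fun i => extract_quad (ht₁ i) (ht₂ i) (hD i).1 (hD i).2.1 (hD i).2.2.1
    (hD i).2.2.2 (hcol i)
  choose a b x y hab hx1 hx2 hy hDm hc hq using H
  refine FD.cube_emb ⟨a, b, x, y, hab, hx1, hx2, hy, hDm, fun i => (hc i).choose,
    fun i => (hc i).choose_spec.choose, fun i => (hc i).choose_spec.choose_spec, ?_⟩
  intro i j hij
  rw [← hq i, ← hq j]
  exact hdisj i j hij

end PolyFlip
end
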